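/- The log-barrier extension is differentiable: for every λ > 0, the function B_λ : ℝ → ℝ defined by B_λ(a) = −(1/λ)·ln(−a) if a ≤ −1/λ², and B_λ(a) = λ·a − (1/λ)·ln(1/λ²) + 1/λ otherwise, is differentiable at every point of ℝ, with derivative B_λ'(a) = −1/(λ·a) for a ≤ −1/λ² and B_λ'(a) = λ for a ≥ −1/λ² (the two formulas agreeing, with common value λ, at a = −1/λ²). -/

import Mathlib

open Classical in
/-- The log-barrier extension `B_λ` (Kervadec et al.), defined for `λ > 0` by
`B_λ(a) = −(1/λ)·ln(−a)` if `a ≤ −1/λ²` and `B_λ(a) = λ·a − (1/λ)·ln(1/λ²) + 1/λ`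
otherwise. -/
noncomputable def logBarrierExt (lam : ℝ) (a : ℝ) : ℝ :=
  if a ≤ -1 / lam ^ 2 then -(1 / lam) * Real.log (-a)
  else lam * a - (1 / lam) * Real.log (1 / lam ^ 2) + 1 / lam

lemma logBarrierExt_aux_g (lam : ℝ) (hlam : 0 < lam) {a : ℝ} (ha : a < 0) :
    HasDerivAt (fun x => -(1 / lam) * Real.log (-x)) (-1 / (lam * a)) a := by
  have h1 : HasDerivAt (fun x : ℝ => Real.log (-x)) ((-a)⁻¹ * (-1)) a :=
    (Real.hasDerivAt_log (ne_of_gt (by linarith) : (-a) ≠ 0)).comp a (hasDerivAt_neg a)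
  have h2 := h1.const_mul (-(1 / lam))
  refine h2.congr_deriv ?_
  have h3 : (-a)⁻¹ = -(a⁻¹) := by
    rw [inv_neg]
  rw [h3]
  field_simp

lemma logBarrierExt_aux_h (lam c d : ℝ) (a : ℝ) :
    HasDerivAt (fun x => lam * x - c + d) lam a := by
  simpa using (((hasDerivAt_id a).const_mul lam).sub_const c).add_const d

lemma logBarrierExt_eq_left (lam : ℝ) {x : ℝ} (hx : x ≤ -1 / lam ^ 2) :
    logBarrierExt lam x = -(1 / lam) * Real.log (-x) := if_pos hx

lemma logBarrierExt_eq_right (lam : ℝ) (hlam : 0 < lam) {x : ℝ} (hx : -1 / lam ^ 2 ≤ x) :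
    logBarrierExt lam x =
      lam * x - (1 / lam) * Real.log (1 / lam ^ 2) + 1 / lam := by
  rcases eq_or_lt_of_le hx with h | h
  · rw [logBarrierExt, if_pos h.symm.le, ← h]
    have : -(-1 / lam ^ 2) = 1 / lam ^ 2 := by ring
    rw [this]
    field_simp
    ring
  · rw [logBarrierExt, if_neg (not_le.mpr h)]

theorem logBarrierExt_differentiable (lam : ℝ) (hlam : 0 < lam) :
    Differentiable ℝ (logBarrierExt lam) ∧
    (∀ a : ℝ, a ≤ -1 / lam ^ 2 → HasDerivAt (logBarrierExt lam) (-1 / (lam * a)) a) ∧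
    (∀ a : ℝ, -1 / lam ^ 2 ≤ a → HasDerivAt (logBarrierExt lam) lam a) ∧
    -1 / (lam * (-1 / lam ^ 2)) = lam := by
  set a0 : ℝ := -1 / lam ^ 2 with ha0def
  have ha0neg : a0 < 0 := by
    rw [ha0def]
    have h2 : (0:ℝ) < lam ^ 2 := by positivity
    have : (0:ℝ) < 1 / lam ^ 2 := by positivity
    rw [neg_div]
    linarith
  have hval : -1 / (lam * a0) = lam := by
    rw [ha0def]; field_simp
  -- junction: HasDerivAt at a0 with derivative lam
  have hjunc : HasDerivAt (logBarrierExt lam) lam a0 := by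
    have hL : HasDerivWithinAt (logBarrierExt lam) lam (Set.Iic a0) a0 := by
      have := ((logBarrierExt_aux_g lam hlam ha0neg).hasDerivWithinAt
        (s := Set.Iic a0)).congr (fun x hx => logBarrierExt_eq_left lam hx)
        (logBarrierExt_eq_left lam le_rfl)
      rwa [hval] at this
    have hR : HasDerivWithinAt (logBarrierExt lam) lam (Set.Ici a0) a0 :=
      ((logBarrierExt_aux_h lam ((1 / lam) * Real.log (1 / lam ^ 2)) (1 / lam)
        a0).hasDerivWithinAt (s := Set.Ici a0)).congr
        (fun x hx => logBarrierExt_eq_right lam hlam hx)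
        (logBarrierExt_eq_right lam hlam le_rfl)
    have := hL.union hR
    rwa [Set.Iic_union_Ici, hasDerivWithinAt_univ] at this
  have hleft : ∀ a : ℝ, a ≤ a0 → HasDerivAt (logBarrierExt lam) (-1 / (lam * a)) a := by
    intro a ha
    rcases eq_or_lt_of_le ha with h | h
    · rw [h, hval]; exact h ▸ hjunc
    · have haneg : a < 0 := h.trans ha0neg
      have : logBarrierExt lam =ᶠ[nhds a] fun x => -(1 / lam) * Real.log (-x) := by
        filter_upwards [Iio_mem_nhds h] with x hx
        exact logBarrierExt_eq_left lam (le_of_lt hx)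
      exact (logBarrierExt_aux_g lam hlam haneg).congr_of_eventuallyEq this
  have hright : ∀ a : ℝ, a0 ≤ a → HasDerivAt (logBarrierExt lam) lam a := by
    intro a ha
    rcases eq_or_lt_of_le ha with h | h
    · exact h ▸ hjunc
    · have : logBarrierExt lam =ᶠ[nhds a]
          fun x => lam * x - (1 / lam) * Real.log (1 / lam ^ 2) + 1 / lam := by
        filter_upwards [Ioi_mem_nhds h] with x hx
        exact logBarrierExt_eq_right lam hlam (le_of_lt hx)
      exact (logBarrierExt_aux_h lam _ _ a).congr_of_eventuallyEq this
  refine ⟨fun a => ?_, hleft, hright, hval⟩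
  rcases le_or_gt a a0 with h | h
  · exact (hleft a h).differentiableAt
  · exact (hright a h.le).differentiableAt
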